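/- Let R be a commutative ring containing the rationals, equipped with a derivation ∂, and suppose R is ∂-simple, i.e., the only ideals I of R with ∂(I) ⊆ I are (0) and R. Then R is an integral domain. -/
import Mathlib

lemma deriv_step {R : Type*} [CommRing R] [Algebra ℚ R] (D : Derivation ℚ R R)
    {x : R} {m j : ℕ} (h : x ^ (m + 1) * (D x) ^ j = 0) :
    x ^ m * (D x) ^ (j + 2) = 0 := by
  have e1 : D (x ^ (m + 1)) = ((m + 1 : ℕ) : R) * (x ^ m * D x) := by
    rw [Derivation.leibniz_pow]
    simp [Nat.add_sub_cancel, nsmul_eq_mul, smul_eq_mul]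
  have hD' : x ^ (m + 1) * D ((D x) ^ j) + (D x) ^ j * D (x ^ (m + 1)) = 0 := by
    have hh := D.leibniz (x ^ (m + 1)) ((D x) ^ j)
    rw [h, map_zero] at hh
    simp only [smul_eq_mul] at hh
    exact hh.symm
  have key : ((m + 1 : ℕ) : R) * (x ^ m * (D x) ^ (j + 2)) = 0 := by
    cases j with
    | zero =>
      have e2 : D ((D x) ^ 0) = 0 := by simp
      rw [e2, e1] at hD'
      linear_combination (D x) * hD'
    | succ jj =>
      have e2 : D ((D x) ^ (jj + 1)) = ((jj + 1 : ℕ) : R) * ((D x) ^ jj * D (D x)) := by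
        rw [Derivation.leibniz_pow]
        simp [Nat.add_sub_cancel, nsmul_eq_mul, smul_eq_mul]
      rw [e1, e2] at hD'
      linear_combination (D x) * hD' - ((jj + 1 : ℕ) : R) * (D (D x)) * h
  have h' : (((m + 1 : ℕ) : ℚ)) • (x ^ m * (D x) ^ (j + 2)) = 0 := by
    rw [Algebra.smul_def, map_natCast]
    exact key
  rcases smul_eq_zero.mp h' with hc | hc
  · exact absurd hc (by exact_mod_cast Nat.succ_ne_zero m)
  · exact hc

lemma deriv_nilp {R : Type*} [CommRing R] [Algebra ℚ R] (D : Derivation ℚ R R)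
    {x : R} (hx : IsNilpotent x) : IsNilpotent (D x) := by
  obtain ⟨n, hn⟩ := hx
  suffices h : ∀ m : ℕ, ∀ j : ℕ, x ^ m * (D x) ^ j = 0 → (D x) ^ (j + 2 * m) = 0 by
    exact ⟨0 + 2 * n, h n 0 (by rw [hn, zero_mul])⟩
  intro m
  induction m with
  | zero => intro j hj; simpa using hj
  | succ k ih =>
    intro j hj
    have := ih (j + 2) (deriv_step D hj)
    convert this using 2
    omega

theorem stmt_2 {R : Type*} [CommRing R] [Algebra ℚ R] [Nontrivial R]
    (D : Derivation ℚ R R)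
    (hsimple : ∀ I : Ideal R, (∀ a ∈ I, D a ∈ I) → I = ⊥ ∨ I = ⊤) :
    IsDomain R := by
  -- Step 1: R is reduced, since the nilradical is a differential ideal.
  haveI hred : IsReduced R := by
    rcases hsimple (nilradical R)
        (fun a ha => mem_nilradical.mpr (deriv_nilp D (mem_nilradical.mp ha))) with h | h
    · constructor
      intro x hx
      have : x ∈ nilradical R := mem_nilradical.mpr hx
      rw [h] at this
      exact Ideal.mem_bot.mp this
    · exfalso
      have : (1 : R) ∈ nilradical R := h ▸ Submodule.mem_top
      obtain ⟨n, hn⟩ := mem_nilradical.mp this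
      rw [one_pow] at hn
      exact one_ne_zero hn
  -- Step 2: no zero divisors.
  haveI : NoZeroDivisors R := by
    constructor
    intro a b hab
    by_cases hb : b = 0
    · exact Or.inr hb
    left
    -- The annihilator of the differential ideal generated by b
    set I : Ideal R :=
      { carrier := {x | ∀ k : ℕ, x * (⇑D)^[k] b = 0}
        add_mem' := fun hx hy k => by rw [add_mul, hx k, hy k, add_zero]
        zero_mem' := fun k => zero_mul _
        smul_mem' := fun c x hx => fun k => by
          rw [smul_eq_mul, mul_assoc, hx k, mul_zero] } with hIdef
    have hImem : ∀ x : R, x ∈ I ↔ ∀ k : ℕ, x * (⇑D)^[k] b = 0 := fun x => Iff.rfl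
    have hdiff : ∀ x ∈ I, D x ∈ I := by
      intro x hx k
      have h1 := (hImem x).mp hx k
      have h2 := (hImem x).mp hx (k + 1)
      have hD := D.leibniz x ((⇑D)^[k] b)
      rw [h1, map_zero] at hD
      simp only [smul_eq_mul] at hD
      rw [Function.iterate_succ_apply'] at h2
      linear_combination -hD - h2
    rcases hsimple I hdiff with hI | hI
    · -- show a ∈ I, hence a = 0
      have claim : ∀ k : ℕ, a ^ (k + 1) * (⇑D)^[k] b = 0 := by
        intro k
        induction k with
        | zero => simpa using hab
        | succ k ih =>
          have e1 : D (a ^ (k + 1)) = ((k + 1 : ℕ) : R) * (a ^ k * D a) := by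
            rw [Derivation.leibniz_pow]
            simp [nsmul_eq_mul, smul_eq_mul]
          have hD := D.leibniz (a ^ (k + 1)) ((⇑D)^[k] b)
          rw [ih, map_zero, e1] at hD
          simp only [smul_eq_mul] at hD
          rw [Function.iterate_succ_apply']
          linear_combination -a * hD - ((k + 1 : ℕ) : R) * (D a) * ih
      have haI : a ∈ I := by
        intro k
        have hnil : IsNilpotent (a * (⇑D)^[k] b) := by
          refine ⟨k + 1, ?_⟩
          rw [mul_pow]
          linear_combination ((⇑D)^[k] b) ^ k * claim k
        exact hnil.eq_zero
      rw [hI] at haI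
      exact Ideal.mem_bot.mp haI
    · exfalso
      have h1 : (1 : R) ∈ I := hI ▸ Submodule.mem_top
      have := (hImem 1).mp h1 0
      simp at this
      exact hb this
  exact NoZeroDivisors.to_isDomain R
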